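/- Let e, f : (Fin m → Fin n) → k be coefficient tensors. Let K be an associative unital k-algebra, X = (x_{ij}) an n×n matrix over K, and d, d' units of K, satisfying for all j_1,…,j_m: Σ_{i_1,…,i_m} e_{i_1⋯i_m} x_{i_1j_1}⋯x_{i_mj_m} = e_{j_1⋯j_m}·d and Σ_{i_1,…,i_m} f_{i_1⋯i_m} x_{j_1i_1}⋯x_{j_mi_m} = f_{j_1⋯j_m}·d'. Assume that the entries x_{ij} generate K as a k-algebra (Algebra.adjoin of the set of entries equals K), that e⊙f := Σ_{i_1,…,i_m} e_{i_1⋯i_m} f_{i_1⋯i_m} ≠ 0, and that either f⋆e or e⋆f equals λ·I_n for some nonzero λ ∈ k. Then d = d' and d lies in the center of K. -/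

import Mathlib

set_option maxHeartbeats 1000000

private lemma sum_pi_cons' {M : Type*} [AddCommMonoid M] (m n : ℕ)
    (F : (Fin (m+1) → Fin n) → M) :
    ∑ iv : Fin (m+1) → Fin n, F iv
      = ∑ r : Fin n, ∑ c : Fin m → Fin n, F (Fin.cons r c) := by
  rw [← (Fin.consEquiv fun _ => Fin n).sum_comp F, Fintype.sum_prod_type]
  rfl

private lemma sum_pi_snoc' {M : Type*} [AddCommMonoid M] (m n : ℕ)
    (F : (Fin (m+1) → Fin n) → M) :
    ∑ iv : Fin (m+1) → Fin n, F iv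
      = ∑ r : Fin n, ∑ c : Fin m → Fin n, F (Fin.snoc c r) := by
  rw [← (Fin.snocEquiv fun _ => Fin n).sum_comp F, Fintype.sum_prod_type]
  rfl

private lemma case_fe {k K : Type*} [Field k] [Ring K] [Algebra k K]
    (m n : ℕ) (e f : (Fin (m + 1) → Fin n) → k)
    (X : Matrix (Fin n) (Fin n) K) (d d' : K)
    (h1 : ∀ jv : Fin (m + 1) → Fin n,
      (∑ iv : Fin (m + 1) → Fin n,
        e iv • (List.ofFn fun t : Fin (m + 1) => X (iv t) (jv t)).prod) = e jv • d)
    (h2 : ∀ jv : Fin (m + 1) → Fin n,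
      (∑ iv : Fin (m + 1) → Fin n,
        f iv • (List.ofFn fun t : Fin (m + 1) => X (jv t) (iv t)).prod) = f jv • d')
    (lam : k)
    (hFE : ∀ p q : Fin n,
      (∑ c : Fin m → Fin n, f (Fin.cons p c) * e (Fin.snoc c q)) = if p = q then lam else 0)
    (s q : Fin n) :
    lam • (X s q * d) = lam • (d' * X s q) := by
  calc lam • (X s q * d)
      = ∑ p : Fin n, (if p = q then lam else 0) • (X s p * d) := by
        simp [ite_smul, Finset.sum_ite_eq']
    _ = ∑ p : Fin n,
          (∑ c : Fin m → Fin n, f (Fin.cons p c) * e (Fin.snoc c q)) • (X s p * d) :=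
        Finset.sum_congr rfl fun p _ => by rw [hFE]
    _ = ∑ p : Fin n, ∑ c : Fin m → Fin n, ∑ iv : Fin (m+1) → Fin n,
          (f (Fin.cons p c) * e iv) •
            (X s p * (List.ofFn fun t : Fin (m+1) => X (iv t) ((Fin.snoc c q : Fin (m+1) → Fin n) t)).prod) := by
        refine Finset.sum_congr rfl fun p _ => ?_
        rw [Finset.sum_smul]
        refine Finset.sum_congr rfl fun c _ => ?_
        rw [show (f (Fin.cons p c) * e (Fin.snoc c q)) • (X s p * d)
            = f (Fin.cons p c) • (X s p * (e (Fin.snoc c q) • d)) from by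
              rw [mul_smul_comm, smul_smul]]
        rw [← h1 (Fin.snoc c q), Finset.mul_sum, Finset.smul_sum]
        exact Finset.sum_congr rfl fun iv _ => by rw [mul_smul_comm, smul_smul]
    _ = ∑ uv : Fin (m+1) → Fin n, ∑ iv : Fin (m+1) → Fin n,
          (f uv * e iv) •
            (X s (uv 0) *
              (List.ofFn fun t : Fin (m+1) =>
                X (iv t) ((Fin.snoc (Fin.tail uv) q : Fin (m+1) → Fin n) t)).prod) := by
        rw [sum_pi_cons' m n (fun uv => ∑ iv : Fin (m+1) → Fin n,
          (f uv * e iv) •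
            (X s (uv 0) *
              (List.ofFn fun t : Fin (m+1) =>
                X (iv t) ((Fin.snoc (Fin.tail uv) q : Fin (m+1) → Fin n) t)).prod))]
        simp only [Fin.cons_zero, Fin.tail_cons]
    _ = ∑ iv : Fin (m+1) → Fin n, ∑ uv : Fin (m+1) → Fin n,
          (f uv * e iv) •
            (X s (uv 0) *
              (List.ofFn fun t : Fin (m+1) =>
                X (iv t) ((Fin.snoc (Fin.tail uv) q : Fin (m+1) → Fin n) t)).prod) := by rw [Finset.sum_comm]
    _ = ∑ iv : Fin (m+1) → Fin n,
          (e iv * f (Fin.cons s fun u => iv u.castSucc)) •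
            (d' * X (iv (Fin.last m)) q) := by
        refine Finset.sum_congr rfl fun iv _ => ?_
        have hsplit : ∀ uv : Fin (m+1) → Fin n,
            X s (uv 0) *
              (List.ofFn fun t : Fin (m+1) =>
                X (iv t) ((Fin.snoc (Fin.tail uv) q : Fin (m+1) → Fin n) t)).prod
              = (List.ofFn fun t : Fin (m+1) =>
                  X ((Fin.cons s (fun u => iv u.castSucc) : Fin (m+1) → Fin n) t) (uv t)).prod
                * X (iv (Fin.last m)) q := by
          intro uv
          rw [List.ofFn_succ' (fun t : Fin (m+1) => X (iv t) ((Fin.snoc (Fin.tail uv) q : Fin (m+1) → Fin n) t)),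
            List.prod_concat,
            List.ofFn_succ (f := fun t : Fin (m+1) =>
              X ((Fin.cons s (fun u => iv u.castSucc) : Fin (m+1) → Fin n) t) (uv t)),
            List.prod_cons]
          simp [Fin.tail, mul_assoc]
        simp_rw [hsplit]
        rw [show (e iv * f (Fin.cons s fun u => iv u.castSucc)) •
              (d' * X (iv (Fin.last m)) q)
            = e iv • ((f (Fin.cons s fun u => iv u.castSucc) • d') * X (iv (Fin.last m)) q)
            from by rw [smul_mul_assoc, smul_smul]]
        rw [← h2 (Fin.cons s fun u => iv u.castSucc), Finset.sum_mul, Finset.smul_sum]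
        refine Finset.sum_congr rfl fun uv _ => ?_
        rw [smul_mul_assoc, smul_smul, mul_comm (e iv) (f uv)]
    _ = ∑ r : Fin n,
          (∑ c : Fin m → Fin n, f (Fin.cons s c) * e (Fin.snoc c r)) • (d' * X r q) := by
        rw [sum_pi_snoc' m n]
        refine Finset.sum_congr rfl fun r _ => ?_
        rw [Finset.sum_smul]
        refine Finset.sum_congr rfl fun c _ => ?_
        simp [mul_comm]
    _ = ∑ r : Fin n, (if s = r then lam else 0) • (d' * X r q) :=
        Finset.sum_congr rfl fun r _ => by rw [hFE]
    _ = lam • (d' * X s q) := by simp [ite_smul, Finset.sum_ite_eq]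

private lemma case_ef {k K : Type*} [Field k] [Ring K] [Algebra k K]
    (m n : ℕ) (e f : (Fin (m + 1) → Fin n) → k)
    (X : Matrix (Fin n) (Fin n) K) (d d' : K)
    (h1 : ∀ jv : Fin (m + 1) → Fin n,
      (∑ iv : Fin (m + 1) → Fin n,
        e iv • (List.ofFn fun t : Fin (m + 1) => X (iv t) (jv t)).prod) = e jv • d)
    (h2 : ∀ jv : Fin (m + 1) → Fin n,
      (∑ iv : Fin (m + 1) → Fin n,
        f iv • (List.ofFn fun t : Fin (m + 1) => X (jv t) (iv t)).prod) = f jv • d')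
    (lam : k)
    (hEF : ∀ p q : Fin n,
      (∑ c : Fin m → Fin n, e (Fin.cons p c) * f (Fin.snoc c q)) = if p = q then lam else 0)
    (s p : Fin n) :
    lam • (d * X s p) = lam • (X s p * d') := by
  calc lam • (d * X s p)
      = ∑ q : Fin n, (if p = q then lam else 0) • (d * X s q) := by
        simp [ite_smul, Finset.sum_ite_eq]
    _ = ∑ q : Fin n,
          (∑ c : Fin m → Fin n, e (Fin.cons p c) * f (Fin.snoc c q)) • (d * X s q) :=
        Finset.sum_congr rfl fun q _ => by rw [hEF]
    _ = ∑ q : Fin n, ∑ c : Fin m → Fin n, ∑ iv : Fin (m+1) → Fin n,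
          (e iv * f (Fin.snoc c q)) •
            ((List.ofFn fun t : Fin (m+1) => X (iv t) ((Fin.cons p c : Fin (m+1) → Fin n) t)).prod * X s q) := by
        refine Finset.sum_congr rfl fun q _ => ?_
        rw [Finset.sum_smul]
        refine Finset.sum_congr rfl fun c _ => ?_
        rw [show (e (Fin.cons p c) * f (Fin.snoc c q)) • (d * X s q)
            = f (Fin.snoc c q) • ((e (Fin.cons p c) • d) * X s q) from by
              rw [smul_mul_assoc, smul_smul, mul_comm (e (Fin.cons p c)) (f (Fin.snoc c q))]]
        rw [← h1 (Fin.cons p c), Finset.sum_mul, Finset.smul_sum]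
        exact Finset.sum_congr rfl fun iv _ => by
          rw [smul_mul_assoc, smul_smul, mul_comm (f (Fin.snoc c q)) (e iv)]
    _ = ∑ uv : Fin (m+1) → Fin n, ∑ iv : Fin (m+1) → Fin n,
          (e iv * f uv) •
            ((List.ofFn fun t : Fin (m+1) =>
                X (iv t) ((Fin.cons p (Fin.init uv) : Fin (m+1) → Fin n) t)).prod
              * X s (uv (Fin.last m))) := by
        rw [sum_pi_snoc' m n (fun uv => ∑ iv : Fin (m+1) → Fin n,
          (e iv * f uv) •
            ((List.ofFn fun t : Fin (m+1) =>
                X (iv t) ((Fin.cons p (Fin.init uv) : Fin (m+1) → Fin n) t)).prod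
              * X s (uv (Fin.last m))))]
        simp only [Fin.init_snoc, Fin.snoc_last]
    _ = ∑ iv : Fin (m+1) → Fin n, ∑ uv : Fin (m+1) → Fin n,
          (e iv * f uv) •
            ((List.ofFn fun t : Fin (m+1) =>
                X (iv t) ((Fin.cons p (Fin.init uv) : Fin (m+1) → Fin n) t)).prod
              * X s (uv (Fin.last m))) := by rw [Finset.sum_comm]
    _ = ∑ iv : Fin (m+1) → Fin n,
          (e iv * f (Fin.snoc (fun u => iv u.succ) s)) • (X (iv 0) p * d') := by
        refine Finset.sum_congr rfl fun iv _ => ?_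
        have hsplit : ∀ uv : Fin (m+1) → Fin n,
            (List.ofFn fun t : Fin (m+1) =>
                X (iv t) ((Fin.cons p (Fin.init uv) : Fin (m+1) → Fin n) t)).prod * X s (uv (Fin.last m))
              = X (iv 0) p *
                (List.ofFn fun t : Fin (m+1) =>
                  X ((Fin.snoc (fun u => iv u.succ) s : Fin (m+1) → Fin n) t) (uv t)).prod := by
          intro uv
          rw [List.ofFn_succ (f := fun t : Fin (m+1) => X (iv t) ((Fin.cons p (Fin.init uv) : Fin (m+1) → Fin n) t)),
            List.prod_cons,
            List.ofFn_succ' (fun t : Fin (m+1) =>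
              X ((Fin.snoc (fun u => iv u.succ) s : Fin (m+1) → Fin n) t) (uv t)),
            List.prod_concat]
          simp [Fin.init, mul_assoc]
        simp_rw [hsplit]
        rw [show (e iv * f (Fin.snoc (fun u => iv u.succ) s)) • (X (iv 0) p * d')
            = e iv • (X (iv 0) p * (f (Fin.snoc (fun u => iv u.succ) s) • d')) from by
              rw [mul_smul_comm, smul_smul]]
        rw [← h2 (Fin.snoc (fun u => iv u.succ) s), Finset.mul_sum, Finset.smul_sum]
        exact Finset.sum_congr rfl fun uv _ => by rw [mul_smul_comm, smul_smul]
    _ = ∑ r : Fin n,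
          (∑ c : Fin m → Fin n, e (Fin.cons r c) * f (Fin.snoc c s)) • (X r p * d') := by
        rw [sum_pi_cons' m n]
        refine Finset.sum_congr rfl fun r _ => ?_
        rw [Finset.sum_smul]
        refine Finset.sum_congr rfl fun c _ => ?_
        simp
    _ = ∑ r : Fin n, (if r = s then lam else 0) • (X r p * d') :=
        Finset.sum_congr rfl fun r _ => by rw [hEF]
    _ = lam • (X s p * d') := by simp [ite_smul, Finset.sum_ite_eq']

/-- Under the `H(e,f)`-type relations with units `d, d'`, if the
entries of `X` generate `K` as a `k`-algebra, `e⊙f ≠ 0`, and either `f⋆e` or `e⋆f`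
is a nonzero scalar multiple of the identity matrix, then `d = d'` is central in `K`. -/
theorem det_central {k K : Type*} [Field k] [Ring K] [Algebra k K]
    (m n : ℕ) (hm : 1 ≤ m) (hn : 1 ≤ n)
    (e f : (Fin (m + 1) → Fin n) → k)
    (X : Matrix (Fin n) (Fin n) K) (d d' : Kˣ)
    (h1 : ∀ jv : Fin (m + 1) → Fin n,
      (∑ iv : Fin (m + 1) → Fin n,
        e iv • (List.ofFn fun t : Fin (m + 1) => X (iv t) (jv t)).prod) =
        e jv • (d : K))
    (h2 : ∀ jv : Fin (m + 1) → Fin n,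
      (∑ iv : Fin (m + 1) → Fin n,
        f iv • (List.ofFn fun t : Fin (m + 1) => X (jv t) (iv t)).prod) =
        f jv • (d' : K))
    (hgen : Algebra.adjoin k {x : K | ∃ i j : Fin n, x = X i j} = ⊤)
    (hodot : (∑ iv : Fin (m + 1) → Fin n, e iv * f iv) ≠ 0)
    (hstar : ∃ lam : k, lam ≠ 0 ∧
      ((Matrix.of fun i j : Fin n =>
          ∑ kv : Fin m → Fin n, f (Fin.cons i kv) * e (Fin.snoc kv j)) =
            lam • (1 : Matrix (Fin n) (Fin n) k) ∨
        (Matrix.of fun i j : Fin n =>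
          ∑ kv : Fin m → Fin n, e (Fin.cons i kv) * f (Fin.snoc kv j)) =
            lam • (1 : Matrix (Fin n) (Fin n) k))) :
    (d : K) = (d' : K) ∧ (d : K) ∈ Set.center K := by
  obtain ⟨lam, hlam, hcase⟩ := hstar
  -- Step 1: d = d'
  have E1 : ∑ jv : Fin (m+1) → Fin n, ∑ iv : Fin (m+1) → Fin n,
      (e iv * f jv) • (List.ofFn fun t : Fin (m+1) => X (iv t) (jv t)).prod
        = (∑ iv : Fin (m+1) → Fin n, e iv * f iv) • (d : K) := by
    rw [Finset.sum_smul]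
    refine Finset.sum_congr rfl fun jv _ => ?_
    calc ∑ iv : Fin (m+1) → Fin n,
          (e iv * f jv) • (List.ofFn fun t : Fin (m+1) => X (iv t) (jv t)).prod
        = f jv • ∑ iv : Fin (m+1) → Fin n,
            e iv • (List.ofFn fun t : Fin (m+1) => X (iv t) (jv t)).prod := by
          rw [Finset.smul_sum]
          exact Finset.sum_congr rfl fun iv _ => by rw [smul_smul, mul_comm]
      _ = (e jv * f jv) • (d : K) := by rw [h1 jv, smul_smul, mul_comm]
  have E2 : ∑ iv : Fin (m+1) → Fin n, ∑ jv : Fin (m+1) → Fin n,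
      (e iv * f jv) • (List.ofFn fun t : Fin (m+1) => X (iv t) (jv t)).prod
        = (∑ iv : Fin (m+1) → Fin n, e iv * f iv) • (d' : K) := by
    rw [Finset.sum_smul]
    refine Finset.sum_congr rfl fun iv _ => ?_
    calc ∑ jv : Fin (m+1) → Fin n,
          (e iv * f jv) • (List.ofFn fun t : Fin (m+1) => X (iv t) (jv t)).prod
        = e iv • ∑ jv : Fin (m+1) → Fin n,
            f jv • (List.ofFn fun t : Fin (m+1) => X (iv t) (jv t)).prod := by
          rw [Finset.smul_sum]
          exact Finset.sum_congr rfl fun jv _ => (mul_smul _ _ _)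
      _ = (e iv * f iv) • (d' : K) := by rw [h2 iv, smul_smul]
  have hsmul : (∑ iv : Fin (m+1) → Fin n, e iv * f iv) • (d : K)
      = (∑ iv : Fin (m+1) → Fin n, e iv * f iv) • (d' : K) := by
    rw [← E1, ← E2]; exact Finset.sum_comm
  have hdd : (d : K) = (d' : K) := by
    have h := congrArg (fun z => (∑ iv : Fin (m+1) → Fin n, e iv * f iv)⁻¹ • z) hsmul
    simpa [smul_smul, inv_mul_cancel₀ hodot] using h
  -- Step 2: d commutes with each entry of X
  have hcomm : ∀ i j : Fin n, X i j * (d : K) = (d : K) * X i j := by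
    intro i j
    rcases hcase with hFE | hEF
    · have hFE' : ∀ p q : Fin n,
          (∑ c : Fin m → Fin n, f (Fin.cons p c) * e (Fin.snoc c q))
            = if p = q then lam else 0 := by
        intro p q
        have h := congrFun (congrFun hFE p) q
        simpa [Matrix.one_apply, mul_ite] using h
      have hkey := case_fe m n e f X (d : K) (d' : K) h1 h2 lam hFE' i j
      have h := congrArg (fun z => lam⁻¹ • z) hkey
      simp only [smul_smul, inv_mul_cancel₀ hlam, one_smul] at h
      rw [h, ← hdd]
    · have hEF' : ∀ p q : Fin n,
          (∑ c : Fin m → Fin n, e (Fin.cons p c) * f (Fin.snoc c q))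
            = if p = q then lam else 0 := by
        intro p q
        have h := congrFun (congrFun hEF p) q
        simpa [Matrix.one_apply, mul_ite] using h
      have hkey := case_ef m n e f X (d : K) (d' : K) h1 h2 lam hEF' i j
      have h := congrArg (fun z => lam⁻¹ • z) hkey
      simp only [smul_smul, inv_mul_cancel₀ hlam, one_smul] at h
      rw [h, ← hdd]
  refine ⟨hdd, ?_⟩
  rw [Semigroup.mem_center_iff]
  intro g
  have hsub : Algebra.adjoin k {x : K | ∃ i j : Fin n, x = X i j}
      ≤ Subalgebra.centralizer k {(d : K)} := by
    rw [Algebra.adjoin_le_iff]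
    rintro x ⟨i, j, rfl⟩
    rw [SetLike.mem_coe, Subalgebra.mem_centralizer_iff]
    rintro a ha
    rw [Set.mem_singleton_iff] at ha
    subst ha
    exact (hcomm i j).symm
  have hg : g ∈ Subalgebra.centralizer k {(d : K)} := by
    apply hsub
    rw [hgen]
    exact Algebra.mem_top
  exact ((Subalgebra.mem_centralizer_iff k).mp hg (d : K) rfl).symm
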